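/- For every α ∈ (0,1), every n ≥ 1 and every configuration w ∈ W_{2n}, one has φ_α(w) ≥ (1+n)^α. -/

import Mathlib

open scoped BigOperators ENNReal

attribute [local instance] Classical.propDecidable

namespace Cooling

/-- Words over the alphabet `{1,2}`, modeled as lists of booleans:
`true` encodes the letter `1`, `false` encodes the letter `2`. -/
abbrev Word := List Bool

/-- `w` is a configuration of length `2*n`: a word of length `2*n` with as many
occurrences of the letter `1` (`true`) as of the letter `2` (`false`). -/
def IsConfig (n : ℕ) (w : Word) : Prop :=
  w.length = 2 * n ∧ w.count true = n

/-- The (finite) set `W_{2n}` of all configurations of length `2*n`. -/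
def configSet (n : ℕ) : Finset Word :=
  ((Finset.univ : Finset (Fin (2 * n) → Bool)).image List.ofFn).filter
    (fun w => w.count true = n)

/-- The number `E(w)` of mismatches of `w`: positions `i` with `w_i = w_{i+1}`. -/
def mismatches (w : Word) : ℕ :=
  (w.zip w.tail).countP (fun p => p.1 == p.2)

/-- The number `F(w)` of flips performable on `w`: positions `i` with `w_i ≠ w_{i+1}`. -/
def flipCount (w : Word) : ℕ :=
  (w.zip w.tail).countP (fun p => p.1 != p.2)

/-- The word `w^{(i)}` obtained from `w` by exchanging the letters at positions
`i` and `i+1` (0-indexed). -/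
def flip (w : Word) (i : ℕ) : Word :=
  (w.set i (w.getD (i + 1) true)).set (i + 1) (w.getD i true)

/-- A flip is permitted at position `i` if both positions `i` and `i+1` exist and the
corresponding letters are different. -/
def CanFlip (w : Word) (i : ℕ) : Prop :=
  i + 1 < w.length ∧ w.getD i true ≠ w.getD (i + 1) true

/-- The set of positions at which a flip is allowed in the cooling process:
positions of permitted flips which do not increase the number of mismatches. -/
noncomputable def allowedFlips (w : Word) : Finset ℕ :=
  (Finset.range w.length).filter
    (fun i => CanFlip w i ∧ mismatches (flip w i) ≤ mismatches w)

/-- One step of the cooling process: if `E(w) = 0`, stay at `w`; otherwise, perform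
a flip chosen uniformly at random among the flips which do not increase the number
of mismatches. -/
noncomputable def coolStep (w : Word) : PMF Word :=
  if h : mismatches w ≠ 0 ∧ (allowedFlips w).Nonempty then
    (PMF.uniformOfFinset (allowedFlips w) h.2).map (flip w)
  else
    PMF.pure w

/-- The distribution of the cooling process at time `t`, started from `w`. -/
noncomputable def coolDist (w : Word) : ℕ → PMF Word
  | 0 => PMF.pure w
  | t + 1 => (coolDist w t).bind coolStep

/-- The expected convergence time `E[T | w₀ = w]` of the cooling process started at `w`,
where `T = min {t ≥ 0 : E(w_t) = 0}`.  Since mismatch-free configurations are absorbing,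
`E[T] = ∑_{t ≥ 0} P(T > t) = ∑_{t ≥ 0} P(E(w_t) ≠ 0)`. -/
noncomputable def expConvTime (w : Word) : ℝ≥0∞ :=
  ∑' t : ℕ, (coolDist w t).toOuterMeasure {v | mismatches v ≠ 0}

/-- The factor of `w` starting at position `s` (0-indexed) of length `l`. -/
def factor (w : Word) (s l : ℕ) : Word := (w.drop s).take l

/-- The height `|p|₁ - |p|₂` of the length-`s` prefix `p` of `w`. -/
def height (w : Word) (s : ℕ) : ℤ :=
  ((w.take s).count true : ℤ) - (w.take s).count false

/-- The occurrence `(s, l)` is a positive Dyck factor of `w`. -/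
def IsPosDyckAt (w : Word) (s l : ℕ) : Prop :=
  0 < l ∧ s + l ≤ w.length ∧
  (factor w s l).count true = (factor w s l).count false ∧
  (∀ i ≤ l, ((factor w s l).take i).count false ≤ ((factor w s l).take i).count true) ∧
  0 ≤ height w s

/-- The occurrence `(s, l)` is a negative Dyck factor of `w`. -/
def IsNegDyckAt (w : Word) (s l : ℕ) : Prop :=
  0 < l ∧ s + l ≤ w.length ∧
  (factor w s l).count true = (factor w s l).count false ∧
  (∀ i ≤ l, ((factor w s l).take i).count true ≤ ((factor w s l).take i).count false) ∧
  height w s ≤ 0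

/-- The occurrence `(s, l)` is a Dyck factor of `w` (positive or negative). -/
def IsDyckAt (w : Word) (s l : ℕ) : Prop :=
  IsPosDyckAt w s l ∨ IsNegDyckAt w s l

/-- The occurrence `(s, l)` is a maximal Dyck factor of `w`: no Dyck factor of `w`
with the same height contains it (other than itself). -/
def IsMaxDyckAt (w : Word) (s l : ℕ) : Prop :=
  IsDyckAt w s l ∧
  ∀ s' l', IsDyckAt w s' l' → height w s' = height w s → s' ≤ s → s + l ≤ s' + l' →
    s' = s ∧ l' = l

/-- The set `DF(w)` of (occurrences of) maximal Dyck factors of `w`,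
encoded as pairs (starting position, length). -/
noncomputable def DF (w : Word) : Finset (ℕ × ℕ) :=
  ((Finset.range (w.length + 1)) ×ˢ (Finset.range (w.length + 1))).filter
    (fun sl => IsMaxDyckAt w sl.1 sl.2)

/-- The variant `φ_α(w) = ∑_{v ∈ DF(w)} (1 + |v|₁)^α`. -/
noncomputable def phi (α : ℝ) (w : Word) : ℝ :=
  ∑ sl ∈ DF w, (1 + ((factor w sl.1 sl.2).count true : ℝ)) ^ α

/-- The volume `V(w) = (1/2) ∑_{k=1}^{|w|} |h_{k-1}(w) + h_k(w)|`: the area between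
the broken-line representation of `w` and the horizontal axis. -/
noncomputable def volume (w : Word) : ℝ :=
  (1 / 2) * ∑ k ∈ Finset.range w.length, |((height w k + height w (k + 1) : ℤ) : ℝ)|

/-! ### Auxiliary lemmas -/

lemma count_true_add_count_false (u : List Bool) : u.count true + u.count false = u.length := by
  induction u with
  | nil => simp
  | cons a v ih => cases a <;> simp [List.count_cons] <;> omega

lemma height_zero (w : Word) : height w 0 = 0 := by simp [height]

lemma height_succ (w : Word) (k : ℕ) (hk : k < w.length) :
    height w (k + 1) = height w k + (if w.getD k false = true then 1 else -1) := by
  have h1 : w.take (k + 1) = w.take k ++ [w[k]] := by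
    rw [List.take_succ, List.getElem?_eq_getElem hk]; rfl
  have h2 : w.getD k false = w[k] := by
    rw [List.getD_eq_getElem?_getD, List.getElem?_eq_getElem hk]; rfl
  unfold height
  rw [h1, List.count_append, List.count_append, h2]
  cases hb : w[k] <;> simp <;> ring

lemma height_step (w : Word) (k : ℕ) (hk : k < w.length) :
    height w (k + 1) = height w k + 1 ∨ height w (k + 1) = height w k - 1 := by
  rcases height_succ w k hk with h
  by_cases hb : w.getD k false = true
  · left; rw [h, if_pos hb]
  · right; rw [h, if_neg hb]; ring

lemma count_take_add (w : Word) (b : Bool) (s i : ℕ) :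
    (w.take (s + i)).count b = (w.take s).count b + (factor w s i).count b := by
  rw [List.take_add, List.count_append]; rfl

lemma height_add (w : Word) (s i : ℕ) :
    height w (s + i) = height w s +
      (((factor w s i).count true : ℤ) - (factor w s i).count false) := by
  unfold height
  rw [count_take_add w true s i, count_take_add w false s i]
  push_cast; ring

lemma length_factor (w : Word) (s l : ℕ) (h : s + l ≤ w.length) :
    (factor w s l).length = l := by
  simp only [factor, List.length_take, List.length_drop]
  omega

lemma factor_take (w : Word) (s l i : ℕ) (h : i ≤ l) :
    (factor w s l).take i = factor w s i := by
  unfold factor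
  rw [List.take_take, min_eq_left h]

lemma isPosDyckAt_of (w : Word) (s l : ℕ) (hl : 0 < l) (hsl : s + l ≤ w.length)
    (h0 : 0 ≤ height w s) (heq : height w (s + l) = height w s)
    (hge : ∀ i ≤ l, height w s ≤ height w (s + i)) : IsPosDyckAt w s l := by
  have key : ∀ i, height w (s + i) - height w s
      = ((factor w s i).count true : ℤ) - (factor w s i).count false := by
    intro i; rw [height_add]; ring
  refine ⟨hl, hsl, ?_, ?_, h0⟩
  · have h1 := key l
    rw [heq] at h1
    omega
  · intro i hi
    rw [factor_take w s l i hi]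
    have h1 := key i
    have h2 := hge i hi
    omega

lemma isNegDyckAt_of (w : Word) (s l : ℕ) (hl : 0 < l) (hsl : s + l ≤ w.length)
    (h0 : height w s ≤ 0) (heq : height w (s + l) = height w s)
    (hle : ∀ i ≤ l, height w (s + i) ≤ height w s) : IsNegDyckAt w s l := by
  have key : ∀ i, height w (s + i) - height w s
      = ((factor w s i).count true : ℤ) - (factor w s i).count false := by
    intro i; rw [height_add]; ring
  refine ⟨hl, hsl, ?_, ?_, h0⟩
  · have h1 := key l
    rw [heq] at h1
    omega
  · intro i hi
    rw [factor_take w s l i hi]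
    have h1 := key i
    have h2 := hle i hi
    omega

lemma exists_height_eq_down (w : Word) (a b : ℕ) (hab : a ≤ b) (hb : b ≤ w.length)
    (c : ℤ) (ha : c ≤ height w a) (hbc : height w b ≤ c) :
    ∃ j, a ≤ j ∧ j ≤ b ∧ height w j = c := by
  have hex : ∃ j, a ≤ j ∧ j ≤ b ∧ height w j ≤ c := ⟨b, hab, le_rfl, hbc⟩
  obtain ⟨h1, h2, h3⟩ := Nat.find_spec hex
  set j0 := Nat.find hex with hj0
  refine ⟨j0, h1, h2, ?_⟩
  rcases Nat.eq_or_lt_of_le h1 with he | hlt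
  · have : height w j0 = height w a := by rw [← he]
    omega
  · have hj1 : j0 - 1 < w.length := by omega
    have hmin := Nat.find_min hex (m := j0 - 1) (by omega)
    have h4 : ¬ height w (j0 - 1) ≤ c := fun hc => hmin ⟨by omega, by omega, hc⟩
    have step := height_step w (j0 - 1) hj1
    have heq1 : j0 - 1 + 1 = j0 := by omega
    rw [heq1] at step
    omega

lemma exists_height_eq_up (w : Word) (a b : ℕ) (hab : a ≤ b) (hb : b ≤ w.length)
    (c : ℤ) (ha : height w a ≤ c) (hbc : c ≤ height w b) :
    ∃ j, a ≤ j ∧ j ≤ b ∧ height w j = c := by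
  have hex : ∃ j, a ≤ j ∧ j ≤ b ∧ c ≤ height w j := ⟨b, hab, le_rfl, hbc⟩
  obtain ⟨h1, h2, h3⟩ := Nat.find_spec hex
  set j0 := Nat.find hex with hj0
  refine ⟨j0, h1, h2, ?_⟩
  rcases Nat.eq_or_lt_of_le h1 with he | hlt
  · have : height w j0 = height w a := by rw [← he]
    omega
  · have hj1 : j0 - 1 < w.length := by omega
    have hmin := Nat.find_min hex (m := j0 - 1) (by omega)
    have h4 : ¬ c ≤ height w (j0 - 1) := fun hc => hmin ⟨by omega, by omega, hc⟩
    have step := height_step w (j0 - 1) hj1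
    have heq1 : j0 - 1 + 1 = j0 := by omega
    rw [heq1] at step
    omega

lemma height_final (w : Word) (n : ℕ) (hw : IsConfig n w) : height w w.length = 0 := by
  obtain ⟨hlen, hcount⟩ := hw
  have h := count_true_add_count_false w
  unfold height
  rw [List.take_length]
  omega

lemma dyck_bounds (w : Word) (s l : ℕ) (hd : IsDyckAt w s l) :
    0 < l ∧ s + l ≤ w.length := by
  rcases hd with h | h
  exacts [⟨h.1, h.2.1⟩, ⟨h.1, h.2.1⟩]

lemma exists_dyck_containing (w : Word) (n : ℕ) (hw : IsConfig n w) (k : ℕ)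
    (hk : k < w.length) : ∃ s l, IsDyckAt w s l ∧ s ≤ k ∧ k < s + l := by
  have hfin : height w w.length = 0 := height_final w n hw
  set s := Nat.findGreatest (fun j => height w j = 0) k with hs
  have hsk : s ≤ k := Nat.findGreatest_le k
  have hs0 : height w s = 0 :=
    Nat.findGreatest_spec (P := fun j => height w j = 0) (Nat.zero_le k) (height_zero w)
  have hexm : ∃ m, k < m ∧ m ≤ w.length ∧ height w m = 0 := ⟨w.length, hk, le_rfl, hfin⟩
  obtain ⟨hkm, hmlen, hm0⟩ := Nat.find_spec hexm
  set m := Nat.find hexm with hm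
  have hnz : ∀ j, s < j → j < m → height w j ≠ 0 := by
    intro j hj1 hj2 hj0
    rcases le_or_gt j k with h | h
    · exact absurd (Nat.le_findGreatest (P := fun j => height w j = 0) h hj0) (by omega)
    · exact (Nat.find_min hexm hj2) ⟨h, by omega, hj0⟩
  have hslen : s < w.length := lt_of_le_of_lt hsk hk
  have hsm : s < m := lt_of_le_of_lt hsk hkm
  have step := height_step w s hslen
  rw [hs0] at step
  have hmeq : s + (m - s) = m := by omega
  rcases step with hup | hdown
  · refine ⟨s, m - s, Or.inl ?_, hsk, by omega⟩
    apply isPosDyckAt_of _ _ _ (by omega) (by omega) (by rw [hs0])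
    · rw [hmeq, hm0, hs0]
    · intro i hi
      rw [hs0]
      rcases Nat.eq_zero_or_pos i with h0 | hpos
      · subst h0; rw [Nat.add_zero, hs0]
      · by_contra hneg
        push_neg at hneg
        obtain ⟨j, hj1, hj2, hj3⟩ := exists_height_eq_down w (s + 1) (s + i)
          (by omega) (by omega) 0 (by omega) (by omega)
        have hjne : j ≠ s + i := by intro he; rw [he] at hj3; omega
        exact hnz j (by omega) (by omega) hj3
  · refine ⟨s, m - s, Or.inr ?_, hsk, by omega⟩
    apply isNegDyckAt_of _ _ _ (by omega) (by omega) (by rw [hs0])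
    · rw [hmeq, hm0, hs0]
    · intro i hi
      rw [hs0]
      rcases Nat.eq_zero_or_pos i with h0 | hpos
      · subst h0; rw [Nat.add_zero, hs0]
      · by_contra hneg
        push_neg at hneg
        obtain ⟨j, hj1, hj2, hj3⟩ := exists_height_eq_up w (s + 1) (s + i)
          (by omega) (by omega) 0 (by omega) (by omega)
        have hjne : j ≠ s + i := by intro he; rw [he] at hj3; omega
        exact hnz j (by omega) (by omega) hj3

lemma exists_max_dyck (w : Word) (s l : ℕ) (hd : IsDyckAt w s l) :
    ∃ p : ℕ × ℕ, p ∈ DF w ∧ p.1 ≤ s ∧ s + l ≤ p.1 + p.2 := by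
  obtain ⟨hl, hsl⟩ := dyck_bounds w s l hd
  set S : Finset (ℕ × ℕ) :=
    ((Finset.range (w.length + 1)) ×ˢ (Finset.range (w.length + 1))).filter
      (fun p => IsDyckAt w p.1 p.2 ∧ height w p.1 = height w s ∧ p.1 ≤ s ∧
        s + l ≤ p.1 + p.2) with hSdef
  have hmemS : ∀ p : ℕ × ℕ, p ∈ S ↔ (IsDyckAt w p.1 p.2 ∧ height w p.1 = height w s ∧
      p.1 ≤ s ∧ s + l ≤ p.1 + p.2) := by
    intro p
    rw [hSdef, Finset.mem_filter, Finset.mem_product, Finset.mem_range, Finset.mem_range]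
    constructor
    · tauto
    · intro h
      obtain ⟨hb1, hb2⟩ := dyck_bounds w p.1 p.2 h.1
      exact ⟨⟨by omega, by omega⟩, h⟩
  have hSne : S.Nonempty := ⟨(s, l), (hmemS _).2 ⟨hd, rfl, le_rfl, le_rfl⟩⟩
  have hs0mem : (S.image Prod.fst).min' (hSne.image _) ∈ S.image Prod.fst :=
    Finset.min'_mem _ _
  set s0 := (S.image Prod.fst).min' (hSne.image _) with hs0
  set T := S.filter (fun p => p.1 = s0) with hT
  have hTne : T.Nonempty := by
    obtain ⟨p, hp, hpe⟩ := Finset.mem_image.mp hs0mem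
    exact ⟨p, Finset.mem_filter.mpr ⟨hp, hpe⟩⟩
  have hl0mem : (T.image Prod.snd).max' (hTne.image _) ∈ T.image Prod.snd :=
    Finset.max'_mem _ _
  set l0 := (T.image Prod.snd).max' (hTne.image _) with hl0
  obtain ⟨p0, hp0T, hp0e⟩ := Finset.mem_image.mp hl0mem
  obtain ⟨hp0S, hp0s⟩ := Finset.mem_filter.mp hp0T
  obtain ⟨hp0d, hp0h, hp0le, hp0cover⟩ := (hmemS p0).1 hp0S
  refine ⟨p0, ?_, hp0le, hp0cover⟩
  have hmax : IsMaxDyckAt w p0.1 p0.2 := by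
    refine ⟨hp0d, ?_⟩
    intro s' l' hd' hh' hle' hcov'
    have hmem' : (s', l') ∈ S := (hmemS _).2
      ⟨hd', by rw [hh', hp0h], le_trans hle' hp0le, le_trans hp0cover hcov'⟩
    have h1 : s0 ≤ s' := Finset.min'_le _ _ (Finset.mem_image_of_mem Prod.fst hmem')
    have h2 : s' = p0.1 := by omega
    have hmem'' : (s', l') ∈ T := Finset.mem_filter.mpr ⟨hmem', by rw [h2] at h1 ⊢; omega⟩
    have h3 : l' ≤ l0 := Finset.le_max' _ _ (Finset.mem_image_of_mem Prod.snd hmem'')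
    refine ⟨h2, ?_⟩
    rw [h2] at hcov'
    omega
  have hp0rng := (Finset.mem_filter.mp (hSdef ▸ hp0S)).1
  unfold DF
  exact Finset.mem_filter.mpr ⟨hp0rng, hmax⟩

lemma count_true_eq_card (u : List Bool) :
    u.count true = ((Finset.range u.length).filter (fun k => u.getD k false = true)).card := by
  induction u with
  | nil => simp
  | cons a v ih =>
    rw [Finset.card_filter, List.length_cons,
      Finset.sum_range_succ' (fun k => if (a :: v).getD k false = true then 1 else 0) v.length]
    simp only [List.getD_cons_succ, List.getD_cons_zero]
    rw [← Finset.card_filter]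
    cases a <;> simp [List.count_cons, ih]

lemma getD_factor (w : Word) (s l j : ℕ) (hj : j < l) :
    (factor w s l).getD j false = w.getD (s + j) false := by
  rw [List.getD_eq_getElem?_getD, List.getD_eq_getElem?_getD]
  unfold factor
  rw [List.getElem?_take, if_pos hj, List.getElem?_drop]

lemma rpow_subadd {α : ℝ} (hα0 : 0 ≤ α) (hα1 : α ≤ 1) {x y : ℝ} (hx : 0 ≤ x) (hy : 0 ≤ y) :
    (x + y) ^ α ≤ x ^ α + y ^ α := by
  lift x to NNReal using hx
  lift y to NNReal using hy
  exact_mod_cast NNReal.rpow_add_le_add_rpow x y hα0 hα1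

lemma rpow_superadd (α : ℝ) (hα0 : 0 < α) (hα1 : α ≤ 1) {ι : Type*} (S : Finset ι)
    (hS : S.Nonempty) (f : ι → ℝ) (hf : ∀ i ∈ S, 0 ≤ f i) :
    (1 + ∑ i ∈ S, f i) ^ α ≤ ∑ i ∈ S, (1 + f i) ^ α := by
  revert hf
  induction hS using Finset.Nonempty.cons_induction with
  | singleton a => intro hf; simp
  | cons a s ha hs ih =>
    intro hf
    rw [Finset.sum_cons, Finset.sum_cons]
    have hfa : 0 ≤ f a := hf a (Finset.mem_cons_self a s)
    have hfs : ∀ i ∈ s, 0 ≤ f i := fun i hi => hf i (Finset.mem_cons.mpr (Or.inr hi))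
    have hsum0 : 0 ≤ ∑ i ∈ s, f i := Finset.sum_nonneg hfs
    have key : (1 + (f a + ∑ i ∈ s, f i)) ^ α ≤ (1 + f a) ^ α + (∑ i ∈ s, f i) ^ α := by
      rw [← add_assoc]
      exact rpow_subadd hα0.le hα1 (by linarith) hsum0
    have key2 : (∑ i ∈ s, f i) ^ α ≤ (1 + ∑ i ∈ s, f i) ^ α :=
      Real.rpow_le_rpow hsum0 (by linarith) hα0.le
    have key3 := ih hfs
    linarith

/-- lower bound `φ_α(w) ≥ (1+n)^α` for every configuration `w ∈ W_{2n}`. -/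
theorem phi_lower_bound (α : ℝ) (hα : α ∈ Set.Ioo (0 : ℝ) 1)
    (n : ℕ) (hn : 1 ≤ n) (w : Word) (hw : IsConfig n w) :
    (1 + (n : ℝ)) ^ α ≤ phi α w := by
  obtain ⟨hα0, hα1⟩ := hα
  set T : Finset ℕ := (Finset.range w.length).filter (fun k => w.getD k false = true)
    with hTdef
  have hTcard : T.card = n := by
    rw [hTdef, ← count_true_eq_card]
    exact hw.2
  have hchoice : ∀ k, k < w.length → ∃ p : ℕ × ℕ, p ∈ DF w ∧ p.1 ≤ k ∧ k < p.1 + p.2 := by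
    intro k hk
    obtain ⟨s, l, hd, h1, h2⟩ := exists_dyck_containing w n hw k hk
    obtain ⟨p, hp, h3, h4⟩ := exists_max_dyck w s l hd
    exact ⟨p, hp, le_trans h3 h1, lt_of_lt_of_le h2 h4⟩
  set g : ℕ → ℕ × ℕ := fun k => if h : k < w.length then (hchoice k h).choose else (0, 0)
    with hg
  have hgmem : ∀ k, k < w.length → g k ∈ DF w ∧ (g k).1 ≤ k ∧ k < (g k).1 + (g k).2 := by
    intro k h
    rw [hg]
    simp only [dif_pos h]
    exact (hchoice k h).choose_spec
  have hmap : ∀ k ∈ T, g k ∈ DF w := by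
    intro k hk
    exact (hgmem k (Finset.mem_range.mp (Finset.mem_filter.mp hk).1)).1
  have hfib : T.card = ∑ d ∈ DF w, (T.filter (fun k => g k = d)).card :=
    Finset.card_eq_sum_card_fiberwise hmap
  have hfb : ∀ d ∈ DF w, (T.filter (fun k => g k = d)).card ≤
      (factor w d.1 d.2).count true := by
    intro d hd
    have hdy : IsDyckAt w d.1 d.2 := ((Finset.mem_filter.mp hd).2).1
    have hdb := dyck_bounds w d.1 d.2 hdy
    have hin : ∀ k ∈ T.filter (fun k => g k = d),
        k < w.length ∧ w.getD k false = true ∧ d.1 ≤ k ∧ k < d.1 + d.2 := by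
      intro k hk
      obtain ⟨hkT, hkg⟩ := Finset.mem_filter.mp hk
      obtain ⟨hkr, hktrue⟩ := Finset.mem_filter.mp hkT
      have hkL := Finset.mem_range.mp hkr
      obtain ⟨_, h1, h2⟩ := hgmem k hkL
      rw [hkg] at h1 h2
      exact ⟨hkL, hktrue, h1, h2⟩
    rw [count_true_eq_card (factor w d.1 d.2), length_factor w d.1 d.2 hdb.2]
    apply Finset.card_le_card_of_injOn (fun k => k - d.1)
    · intro k hk
      obtain ⟨hkL, hktrue, h1, h2⟩ := hin k hk
      refine Finset.mem_filter.mpr ⟨Finset.mem_range.mpr (by simp only; omega), ?_⟩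
      rw [getD_factor w d.1 d.2 (k - d.1) (by omega), (by omega : d.1 + (k - d.1) = k)]
      exact hktrue
    · intro x hx y hy hxy
      obtain ⟨_, _, hx1, _⟩ := hin x hx
      obtain ⟨_, _, hy1, _⟩ := hin y hy
      simp only at hxy
      omega
  have hsum : n ≤ ∑ d ∈ DF w, (factor w d.1 d.2).count true := by
    calc n = T.card := hTcard.symm
    _ = ∑ d ∈ DF w, (T.filter (fun k => g k = d)).card := hfib
    _ ≤ ∑ d ∈ DF w, (factor w d.1 d.2).count true := Finset.sum_le_sum hfb
  have hne : (DF w).Nonempty := by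
    rcases Finset.eq_empty_or_nonempty (DF w) with he | h
    · rw [he] at hsum
      simp at hsum
      omega
    · exact h
  unfold phi
  have hcast : (n : ℝ) ≤ ∑ d ∈ DF w, ((factor w d.1 d.2).count true : ℝ) := by
    exact_mod_cast hsum
  have h1 : (1 + (n : ℝ)) ^ α ≤
      (1 + ∑ d ∈ DF w, ((factor w d.1 d.2).count true : ℝ)) ^ α := by
    apply Real.rpow_le_rpow (by positivity) (by linarith) hα0.le
  exact le_trans h1 (rpow_superadd α hα0 hα1.le (DF w) hne _
    (fun d _ => by positivity))

end Cooling
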